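/- Let V be a finite-dimensional real inner product space with decomposition V = Z ⊕ Z⊥ for a subspace Z, and let {u₁,…,u_m} be an orthonormal basis of Z. Then the composite E_{u₁} ∘ ⋯ ∘ E_{u_m} : C(V) → C(V), where E_u(c) = ½(c + u·γ(c)·u), is a projection whose range is exactly the subalgebra C(Z⊥) generated by Z⊥. -/

import Mathlib

open CliffordAlgebra InnerProductSpace

noncomputable def Eproj {V : Type*} [NormedAddCommGroup V] [InnerProductSpace ℝ V]
    (Q : QuadraticForm ℝ V) (u : V) (c : CliffordAlgebra Q) : CliffordAlgebra Q :=
  (1/2 : ℝ) • (c + ι Q u * involute c * ι Q u)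

noncomputable def EprojComp {V : Type*} [NormedAddCommGroup V] [InnerProductSpace ℝ V]
    (Q : QuadraticForm ℝ V) : List V → CliffordAlgebra Q → CliffordAlgebra Q
  | [], c => c
  | u :: t, c => Eproj Q u (EprojComp Q t c)

section Aux

variable {V : Type*} [NormedAddCommGroup V] [InnerProductSpace ℝ V]
variable (Q : QuadraticForm ℝ V)

lemma myPolar (hQ : ∀ v : V, Q v = ⟪v, v⟫_ℝ) (a b : V) :
    QuadraticMap.polar Q a b = 2 * ⟪a, b⟫_ℝ := by
  simp only [QuadraticMap.polar, hQ]
  rw [real_inner_add_add_self]; ring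

lemma myAnticomm (hQ : ∀ v : V, Q v = ⟪v, v⟫_ℝ) {a b : V} (h : ⟪a, b⟫_ℝ = 0) :
    ι Q a * ι Q b = -(ι Q b * ι Q a) := by
  have H := ι_mul_ι_add_swap (Q := Q) a b
  rw [myPolar Q hQ, h, mul_zero, map_zero] at H
  exact eq_neg_of_add_eq_zero_left H

/-- `ι u` commutes with elements of the subalgebra generated by `u`-orthogonal
vectors, up to `involute`. -/
lemma myComm (hQ : ∀ v : V, Q v = ⟪v, v⟫_ℝ) (S : Set V) {u : V}
    (hu : ∀ w ∈ S, ⟪u, w⟫_ℝ = 0) {x : CliffordAlgebra Q}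
    (hx : x ∈ Algebra.adjoin ℝ (ι Q '' S)) :
    ι Q u * x = involute x * ι Q u := by
  induction hx using Algebra.adjoin_induction with
  | mem y hy =>
    obtain ⟨w, hw, rfl⟩ := hy
    rw [involute_ι, myAnticomm Q hQ (hu w hw), neg_mul]
  | algebraMap r =>
    simp [Algebra.commutes]
  | add y z hy hz ihy ihz => rw [mul_add, map_add, add_mul, ihy, ihz]
  | mul y z hy hz ihy ihz =>
    rw [← mul_assoc, ihy, mul_assoc, ihz, ← mul_assoc, map_mul]

lemma myInvoluteMem (S : Submodule ℝ V) {x : CliffordAlgebra Q}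
    (hx : x ∈ Algebra.adjoin ℝ (ι Q '' (S : Set V))) :
    involute x ∈ Algebra.adjoin ℝ (ι Q '' (S : Set V)) := by
  induction hx using Algebra.adjoin_induction with
  | mem y hy =>
    obtain ⟨w, hw, rfl⟩ := hy
    rw [involute_ι, ← map_neg]
    exact Algebra.subset_adjoin ⟨-w, neg_mem hw, rfl⟩
  | algebraMap r =>
    have h : involute ((algebraMap ℝ (CliffordAlgebra Q)) r)
        = algebraMap ℝ (CliffordAlgebra Q) r := by simp
    rw [h]; exact algebraMap_mem _ r
  | add y z hy hz ihy ihz => rw [map_add]; exact add_mem ihy ihz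
  | mul y z hy hz ihy ihz => rw [map_mul]; exact mul_mem ihy ihz

lemma myFix (hQ : ∀ v : V, Q v = ⟪v, v⟫_ℝ) (S : Submodule ℝ V) {u : V}
    (hQu : Q u = 1) (hu : ∀ w ∈ (S : Set V), ⟪u, w⟫_ℝ = 0) {x : CliffordAlgebra Q}
    (hx : x ∈ Algebra.adjoin ℝ (ι Q '' (S : Set V))) :
    ι Q u * involute x * ι Q u = x := by
  have h1 : ι Q u * involute x = x * ι Q u := by
    have := myComm Q hQ (S : Set V) hu (myInvoluteMem Q S hx)
    rwa [involute_involute] at this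
  rw [h1, mul_assoc, ι_sq_scalar, hQu, map_one, mul_one]

lemma myEprojFix (hQ : ∀ v : V, Q v = ⟪v, v⟫_ℝ) (S : Submodule ℝ V) {u : V}
    (hQu : Q u = 1) (hu : ∀ w ∈ (S : Set V), ⟪u, w⟫_ℝ = 0) {x : CliffordAlgebra Q}
    (hx : x ∈ Algebra.adjoin ℝ (ι Q '' (S : Set V))) :
    Eproj Q u x = x := by
  rw [Eproj, myFix Q hQ S hQu hu hx, ← two_smul ℝ x, smul_smul]
  norm_num

/-- Decomposition `x = a + u * b` with `a, b` in the subalgebra generated by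
the part of `T` orthogonal to `u`. -/
lemma myDecomp (hQ : ∀ v : V, Q v = ⟪v, v⟫_ℝ) (T : Submodule ℝ V) {u : V}
    (huT : u ∈ T) (hQu : Q u = 1) {x : CliffordAlgebra Q}
    (hx : x ∈ Algebra.adjoin ℝ (ι Q '' (T : Set V))) :
    ∃ a b, a ∈ Algebra.adjoin ℝ (ι Q '' (((ℝ ∙ u)ᗮ ⊓ T : Submodule ℝ V) : Set V)) ∧
      b ∈ Algebra.adjoin ℝ (ι Q '' (((ℝ ∙ u)ᗮ ⊓ T : Submodule ℝ V) : Set V)) ∧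
      x = a + ι Q u * b := by
  have huu : ⟪u, u⟫_ℝ = 1 := by rw [← hQ, hQu]
  set S : Submodule ℝ V := (ℝ ∙ u)ᗮ ⊓ T with hS
  have hSu : ∀ w ∈ (S : Set V), ⟪u, w⟫_ℝ = 0 := by
    intro w hw
    exact Submodule.mem_orthogonal_singleton_iff_inner_right.mp hw.1
  induction hx using Algebra.adjoin_induction with
  | mem y hy =>
    obtain ⟨t, ht, rfl⟩ := hy
    refine ⟨ι Q (t - ⟪u, t⟫_ℝ • u), algebraMap ℝ _ ⟪u, t⟫_ℝ, ?_, algebraMap_mem _ _, ?_⟩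
    · refine Algebra.subset_adjoin ⟨t - ⟪u, t⟫_ℝ • u, ?_, rfl⟩
      refine ⟨Submodule.mem_orthogonal_singleton_iff_inner_right.mpr ?_,
        sub_mem ht (Submodule.smul_mem _ _ huT)⟩
      rw [inner_sub_right, real_inner_smul_right, huu]; ring
    · rw [← Algebra.commutes, ← Algebra.smul_def, map_sub, map_smul]
      abel
  | algebraMap r =>
    exact ⟨algebraMap ℝ _ r, 0, algebraMap_mem _ _, zero_mem _, by rw [mul_zero, add_zero]⟩
  | add y z hy hz ihy ihz =>
    obtain ⟨a, b, ha, hb, rfl⟩ := ihy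
    obtain ⟨a', b', ha', hb', rfl⟩ := ihz
    exact ⟨a + a', b + b', add_mem ha ha', add_mem hb hb', by rw [mul_add]; abel⟩
  | mul y z hy hz ihy ihz =>
    obtain ⟨a, b, ha, hb, rfl⟩ := ihy
    obtain ⟨a', b', ha', hb', rfl⟩ := ihz
    refine ⟨a * a' + involute b * b', involute a * b' + b * a',
      add_mem (mul_mem ha ha') (mul_mem (myInvoluteMem Q S hb) hb'),
      add_mem (mul_mem (myInvoluteMem Q S ha) hb') (mul_mem hb ha'), ?_⟩
    have e1 : a * (ι Q u * b') = ι Q u * (involute a * b') := by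
      have h := myComm Q hQ (S : Set V) hSu (myInvoluteMem Q S ha)
      rw [involute_involute] at h
      rw [← mul_assoc, ← h, mul_assoc]
    have e2 : ι Q u * b * (ι Q u * b') = involute b * b' := by
      have h := myComm Q hQ (S : Set V) hSu (myInvoluteMem Q S hb)
      rw [involute_involute] at h
      calc ι Q u * b * (ι Q u * b') = ι Q u * (b * ι Q u) * b' := by noncomm_ring
        _ = ι Q u * (ι Q u * involute b) * b' := by rw [← h]
        _ = (ι Q u * ι Q u) * (involute b * b') := by noncomm_ring
        _ = involute b * b' := by rw [ι_sq_scalar, hQu, map_one, one_mul]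
    calc (a + ι Q u * b) * (a' + ι Q u * b')
        = a * a' + a * (ι Q u * b') + (ι Q u * b * a' + ι Q u * b * (ι Q u * b')) := by
          noncomm_ring
      _ = a * a' + involute b * b' + ι Q u * (involute a * b' + b * a') := by
          rw [e1, e2]; noncomm_ring

/-- The orthogonal-complement submodule attached to a list of vectors. -/
noncomputable def Kspan {V : Type*} [NormedAddCommGroup V] [InnerProductSpace ℝ V] :
    List V → Submodule ℝ V
  | [] => ⊤
  | v :: t => (ℝ ∙ v)ᗮ ⊓ Kspan t

lemma mem_Kspan {l : List V} {x : V} :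
    x ∈ Kspan l ↔ ∀ v ∈ l, ⟪v, x⟫_ℝ = 0 := by
  induction l with
  | nil => simp [Kspan]
  | cons v t ih =>
    simp [Kspan, Submodule.mem_inf, Submodule.mem_orthogonal_singleton_iff_inner_right, ih]

lemma myTop (c : CliffordAlgebra Q) :
    c ∈ Algebra.adjoin ℝ (ι Q '' ((⊤ : Submodule ℝ V) : Set V)) := by
  induction c using CliffordAlgebra.induction with
  | algebraMap r => exact algebraMap_mem _ r
  | ι x => exact Algebra.subset_adjoin ⟨x, trivial, rfl⟩
  | mul a b ha hb => exact mul_mem ha hb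
  | add a b ha hb => exact add_mem ha hb

lemma myMain (hQ : ∀ v : V, Q v = ⟪v, v⟫_ℝ) (l : List V)
    (hunit : ∀ v ∈ l, Q v = 1)
    (hpair : l.Pairwise (fun a b => ⟪a, b⟫_ℝ = 0)) (c : CliffordAlgebra Q) :
    EprojComp Q l c ∈ Algebra.adjoin ℝ (ι Q '' (Kspan l : Set V)) := by
  induction l with
  | nil => exact myTop Q c
  | cons v t ih =>
    have hpt : t.Pairwise (fun a b => ⟪a, b⟫_ℝ = 0) := hpair.of_cons
    have hx : EprojComp Q t c ∈ Algebra.adjoin ℝ (ι Q '' (Kspan t : Set V)) :=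
      ih (fun w hw => hunit w (List.mem_cons_of_mem _ hw)) hpt
    have hvK : v ∈ Kspan t := by
      rw [mem_Kspan]
      intro w hw
      rw [real_inner_comm]
      exact (List.pairwise_cons.mp hpair).1 w hw
    have hQv : Q v = 1 := hunit v (List.mem_cons_self)
    obtain ⟨a, b, ha, hb, hab⟩ := myDecomp Q hQ (Kspan t) hvK hQv hx
    set S : Submodule ℝ V := (ℝ ∙ v)ᗮ ⊓ Kspan t with hS
    have hSv : ∀ w ∈ (S : Set V), ⟪v, w⟫_ℝ = 0 := fun w hw =>
      Submodule.mem_orthogonal_singleton_iff_inner_right.mp hw.1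
    have key : EprojComp Q (v :: t) c = a := by
      show Eproj Q v (EprojComp Q t c) = a
      rw [hab, Eproj]
      have hcomm : ι Q v * b = involute b * ι Q v := myComm Q hQ (S : Set V) hSv hb
      have hia : ι Q v * involute a * ι Q v = a := myFix Q hQ S hQv hSv ha
      have hib : ι Q v * (ι Q v * involute b) * ι Q v = ι Q v * b := by
        rw [← mul_assoc (ι Q v) (ι Q v) (involute b), ι_sq_scalar, hQv, map_one,
          one_mul, ← hcomm]
      have h2 : ι Q v * involute (a + ι Q v * b) * ι Q v = a - ι Q v * b := by
        calc ι Q v * involute (a + ι Q v * b) * ι Q v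
            = ι Q v * (involute a - ι Q v * involute b) * ι Q v := by
              rw [map_add, map_mul, involute_ι, neg_mul, ← sub_eq_add_neg]
          _ = ι Q v * involute a * ι Q v - ι Q v * (ι Q v * involute b) * ι Q v := by
              noncomm_ring
          _ = a - ι Q v * b := by rw [hia, hib]
      rw [h2]
      have : a + ι Q v * b + (a - ι Q v * b) = (2 : ℝ) • a := by
        rw [two_smul]; abel
      rw [this, smul_smul]
      norm_num
    rw [key]
    exact ha

end Aux

section Aux2

variable {V : Type*} [NormedAddCommGroup V] [InnerProductSpace ℝ V]
variable (Q : QuadraticForm ℝ V)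

lemma myFixList (hQ : ∀ v : V, Q v = ⟪v, v⟫_ℝ) (S : Submodule ℝ V) (l : List V)
    (h : ∀ v ∈ l, Q v = 1 ∧ ∀ w ∈ (S : Set V), ⟪v, w⟫_ℝ = 0)
    {x : CliffordAlgebra Q} (hx : x ∈ Algebra.adjoin ℝ (ι Q '' (S : Set V))) :
    EprojComp Q l x = x := by
  induction l with
  | nil => rfl
  | cons v t ih =>
    show Eproj Q v (EprojComp Q t x) = x
    rw [ih (fun w hw => h w (List.mem_cons_of_mem _ hw))]
    exact myEprojFix Q hQ S (h v (List.mem_cons_self)).1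
      (h v (List.mem_cons_self)).2 hx

lemma Kspan_ofFn_eq {m : ℕ} (u : Fin m → V) :
    Kspan (List.ofFn u) = (Submodule.span ℝ (Set.range u))ᗮ := by
  ext x
  rw [mem_Kspan, Submodule.mem_orthogonal]
  constructor
  · intro h y hy
    induction hy using Submodule.span_induction with
    | mem y hy =>
      obtain ⟨i, rfl⟩ := hy
      exact h (u i) (List.mem_ofFn.mpr ⟨i, rfl⟩)
    | zero => exact inner_zero_left x
    | add a b ha hb iha ihb => rw [inner_add_left, iha, ihb, add_zero]
    | smul r a ha iha => rw [real_inner_smul_left, iha, mul_zero]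
  · intro h v hv
    obtain ⟨i, rfl⟩ := List.mem_ofFn.mp hv
    exact h _ (Submodule.subset_span ⟨i, rfl⟩)

end Aux2

theorem stmt11 {V : Type*} [NormedAddCommGroup V] [InnerProductSpace ℝ V]
    [FiniteDimensional ℝ V] (Q : QuadraticForm ℝ V) (hQ : ∀ v : V, Q v = ⟪v, v⟫_ℝ)
    (Z : Submodule ℝ V) (m : ℕ) (u : Fin m → V) (hON : Orthonormal ℝ u)
    (hspan : Submodule.span ℝ (Set.range u) = Z) :
    (∀ c, EprojComp Q (List.ofFn u) (EprojComp Q (List.ofFn u) c) =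
        EprojComp Q (List.ofFn u) c) ∧
      Set.range (EprojComp Q (List.ofFn u)) =
        (Algebra.adjoin ℝ (ι Q '' (Zᗮ : Set V)) : Set (CliffordAlgebra Q)) := by
  classical
  have horth := orthonormal_iff_ite.mp hON
  have hunit : ∀ v ∈ List.ofFn u, Q v = 1 := by
    intro v hv
    obtain ⟨i, rfl⟩ := List.mem_ofFn.mp hv
    rw [hQ]
    simpa using horth i i
  have hpair : (List.ofFn u).Pairwise (fun a b => ⟪a, b⟫_ℝ = 0) := by
    rw [List.pairwise_ofFn]
    intro i j hij
    simpa [Fin.ne_of_lt hij] using horth i j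
  have hK : Kspan (List.ofFn u) = Zᗮ := by rw [Kspan_ofFn_eq, hspan]
  have hmain : ∀ c, EprojComp Q (List.ofFn u) c ∈
      Algebra.adjoin ℝ (ι Q '' (Zᗮ : Set V)) := by
    intro c
    have := myMain Q hQ _ hunit hpair c
    rwa [hK] at this
  have hfix : ∀ x ∈ Algebra.adjoin ℝ (ι Q '' (Zᗮ : Set V)),
      EprojComp Q (List.ofFn u) x = x := by
    intro x hx
    refine myFixList Q hQ Zᗮ _ ?_ hx
    intro v hv
    obtain ⟨i, rfl⟩ := List.mem_ofFn.mp hv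
    refine ⟨hunit _ hv, ?_⟩
    intro w hw
    exact (Submodule.mem_orthogonal Z w).mp hw (u i)
      (hspan ▸ Submodule.subset_span ⟨i, rfl⟩)
  refine ⟨fun c => hfix _ (hmain c), ?_⟩
  ext x
  simp only [Set.mem_range, SetLike.mem_coe]
  constructor
  · rintro ⟨c, rfl⟩
    exact hmain c
  · intro hx
    exact ⟨x, hfix x hx⟩
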